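/- Let 𝔠 = {C^0,…,C^{M−1}} be an (M,M,N1)-complete complementary code with sequences c^m_n of length N1 and 𝔡 = {D^0,…,D^{M−1}} be an (M,M,N2)-complete complementary code with sequences d^l_n of length N2. For fixed 0 ≤ m ≤ M−1 and each 0 ≤ l ≤ M−1 define the length-M·N1·N2 sequence e^m_l = (c^m_0 ⊗ d^l_0) ∥ (c^m_1 ⊗ d^l_1) ∥ … ∥ (c^m_{M−1} ⊗ d^l_{M−1}). Then E^m = {e^m_0,…,e^m_{M−1}} is a complementary set: Σ_{l=0}^{M−1} C_{e^m_l}(τ) = M²·N1·N2 if τ = 0, and equals 0 for all 1 ≤ τ ≤ M·N1·N2 − 1. -/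

import Mathlib

open Finset

/-- Aperiodic cross-correlation of length-`L` complex sequences at shift `0 ≤ τ`. -/
noncomputable def aCorr (a b : ℕ → ℂ) (L τ : ℕ) : ℂ :=
  ∑ k ∈ Finset.range (L - τ), a k * (starRingEnd ℂ) (b (k + τ))

/-- Periodic cross-correlation of length-`L` complex sequences at shift `τ`. -/
noncomputable def pCorr (a b : ℕ → ℂ) (L τ : ℕ) : ℂ :=
  ∑ k ∈ Finset.range L, a k * (starRingEnd ℂ) (b ((k + τ) % L))

/-- Kronecker product of a sequence `x` (length `N1`) with a sequence `y` of length `N2`: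
`(x ⊗ y) (k*N2 + l) = x k * y l`. -/
noncomputable def kron (x y : ℕ → ℂ) (N2 : ℕ) : ℕ → ℂ :=
  fun n => x (n / N2) * y (n % N2)

/-- The length-`M·N1·N2` sequence `e m l = (c m 0 ⊗ d l 0) ∥ (c m 1 ⊗ d l 1) ∥ ⋯`,
whose entry at position `n·N1·N2 + k·N2 + j` is `c m n k * d l n j`. -/
noncomputable def eSeq (N1 N2 : ℕ) (c d : ℕ → ℕ → ℕ → ℂ) (m l : ℕ) : ℕ → ℂ :=
  fun pos =>
    c m (pos / (N1 * N2)) ((pos % (N1 * N2)) / N2) *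
      d l (pos / (N1 * N2)) ((pos % (N1 * N2)) % N2)

/-! ### Auxiliary Laurent-polynomial machinery -/

/-- The generating "polynomial" `∑_{k<L} a k · T^k` of a length-`L` sequence,
as an element of `AddMonoidAlgebra ℂ ℤ`. -/
noncomputable def pol (a : ℕ → ℂ) (L : ℕ) : AddMonoidAlgebra ℂ ℤ :=
  ∑ k ∈ Finset.range L, AddMonoidAlgebra.single (k : ℤ) (a k)

/-- The conjugate-reflected polynomial `∑_{k<L} conj (a k) · T^(-k)`. -/
noncomputable def polc (a : ℕ → ℂ) (L : ℕ) : AddMonoidAlgebra ℂ ℤ :=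
  ∑ k ∈ Finset.range L, AddMonoidAlgebra.single (-(k : ℤ)) ((starRingEnd ℂ) (a k))

lemma mul_expand (a b : ℕ → ℂ) (L : ℕ) :
    pol a L * polc b L =
      ∑ k ∈ Finset.range L, ∑ k' ∈ Finset.range L,
        AddMonoidAlgebra.single ((k : ℤ) - k') (a k * (starRingEnd ℂ) (b k')) := by
  rw [pol, polc, Finset.sum_mul_sum]
  refine Finset.sum_congr rfl fun k _ => Finset.sum_congr rfl fun k' _ => ?_
  rw [AddMonoidAlgebra.single_mul_single, sub_eq_add_neg]

lemma coeff_neg (a b : ℕ → ℂ) (L τ : ℕ) :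
    (pol a L * polc b L).coeff (-(τ : ℤ)) = aCorr a b L τ := by
  rw [mul_expand, AddMonoidAlgebra.coeff_sum, Finsupp.finset_sum_apply]
  have h1 : ∀ k ∈ Finset.range L,
      (∑ k' ∈ Finset.range L,
        AddMonoidAlgebra.single ((k : ℤ) - k') (a k * (starRingEnd ℂ) (b k')) :
          AddMonoidAlgebra ℂ ℤ).coeff (-(τ:ℤ)) =
      if k + τ < L then a k * (starRingEnd ℂ) (b (k + τ)) else 0 := by
    intro k _
    rw [AddMonoidAlgebra.coeff_sum, Finsupp.finset_sum_apply]
    have : ∀ k' ∈ Finset.range L,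
        (AddMonoidAlgebra.single ((k : ℤ) - k') (a k * (starRingEnd ℂ) (b k')) :
          AddMonoidAlgebra ℂ ℤ).coeff (-(τ:ℤ)) =
        if k' = k + τ then a k * (starRingEnd ℂ) (b k') else 0 := by
      intro k' _
      rw [AddMonoidAlgebra.coeff_single, Finsupp.single_apply]
      congr 1
      simp only [eq_iff_iff]
      omega
    rw [Finset.sum_congr rfl this, Finset.sum_ite_eq' (Finset.range L)]
    simp [Finset.mem_range]
  rw [Finset.sum_congr rfl h1, Finset.sum_ite, Finset.sum_const_zero, add_zero, aCorr]
  apply Finset.sum_congr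
  · ext k; simp only [Finset.mem_filter, Finset.mem_range]; omega
  · intros; rfl

lemma coeff_pos (a b : ℕ → ℂ) (L τ : ℕ) :
    (pol a L * polc b L).coeff ((τ : ℤ)) = (starRingEnd ℂ) (aCorr b a L τ) := by
  rw [mul_expand, Finset.sum_comm, AddMonoidAlgebra.coeff_sum, Finsupp.finset_sum_apply]
  have h1 : ∀ k' ∈ Finset.range L,
      (∑ k ∈ Finset.range L,
        AddMonoidAlgebra.single ((k : ℤ) - k') (a k * (starRingEnd ℂ) (b k')) :
          AddMonoidAlgebra ℂ ℤ).coeff ((τ:ℤ)) =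
      if k' + τ < L then a (k' + τ) * (starRingEnd ℂ) (b k') else 0 := by
    intro k' _
    rw [AddMonoidAlgebra.coeff_sum, Finsupp.finset_sum_apply]
    have : ∀ k ∈ Finset.range L,
        (AddMonoidAlgebra.single ((k : ℤ) - k') (a k * (starRingEnd ℂ) (b k')) :
          AddMonoidAlgebra ℂ ℤ).coeff ((τ:ℤ)) =
        if k = k' + τ then a k * (starRingEnd ℂ) (b k') else 0 := by
      intro k _
      rw [AddMonoidAlgebra.coeff_single, Finsupp.single_apply]
      congr 1
      simp only [eq_iff_iff]
      omega
    rw [Finset.sum_congr rfl this, Finset.sum_ite_eq' (Finset.range L)]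
    simp [Finset.mem_range]
  rw [Finset.sum_congr rfl h1, Finset.sum_ite, Finset.sum_const_zero, add_zero, aCorr, map_sum]
  rw [show (Finset.range L).filter (fun k' => k' + τ < L) = Finset.range (L - τ) by
    ext k; simp only [Finset.mem_filter, Finset.mem_range]; omega]
  refine Finset.sum_congr rfl fun k _ => ?_
  simp [mul_comm]

lemma aCorr_big (a b : ℕ → ℂ) (L τ : ℕ) (h : L ≤ τ) : aCorr a b L τ = 0 := by
  rw [aCorr, Nat.sub_eq_zero_of_le h]; simp

set_option linter.unreachableTactic false in
set_option linter.unusedTactic false in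
lemma ccc_poly (M N : ℕ) (x : ℕ → ℕ → ℕ → ℂ)
    (hx : ∀ m1 < M, ∀ m2 < M, ∀ τ < N,
      ∑ n ∈ Finset.range M, aCorr (x m1 n) (x m2 n) N τ =
        if m1 = m2 ∧ τ = 0 then (M * N : ℂ) else 0)
    (hN : 0 < N) :
    ∀ m1 < M, ∀ m2 < M,
      ∑ n ∈ Finset.range M, pol (x m1 n) N * polc (x m2 n) N =
        AddMonoidAlgebra.single 0 (if m1 = m2 then (M * N : ℂ) else 0) := by
  intro m1 hm1 m2 hm2
  ext t
  rw [AddMonoidAlgebra.coeff_sum, Finsupp.finset_sum_apply, AddMonoidAlgebra.coeff_single,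
    Finsupp.single_apply]
  obtain ⟨τ, rfl | rfl⟩ := Int.eq_nat_or_neg t
  · -- t = τ ≥ 0
    simp only [fun n => coeff_pos (x m1 n) (x m2 n) N τ, ← map_sum]
    by_cases hτ : τ < N
    · rw [hx m2 hm2 m1 hm1 τ hτ]
      by_cases h0 : τ = 0
      · subst h0
        by_cases he : m1 = m2 <;> simp [he, eq_comm (a := m2)] <;> simp [he]
      · have : ¬((0:ℤ) = (τ:ℤ)) := by omega
        simp [h0, this]
    · rw [Finset.sum_congr rfl fun n _ => aCorr_big _ _ _ _ (by omega)]
      have : ¬((0:ℤ) = (τ:ℤ)) := by omega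
      simp [this]
  · -- t = -τ
    simp only [fun n => coeff_neg (x m1 n) (x m2 n) N τ]
    by_cases hτ : τ < N
    · rw [hx m1 hm1 m2 hm2 τ hτ]
      by_cases h0 : τ = 0
      · subst h0; simp
      · have : ¬((0:ℤ) = -(τ:ℤ)) := by omega
        simp [h0, this]
    · rw [Finset.sum_congr rfl fun n _ => aCorr_big _ _ _ _ (by omega)]
      have : ¬((0:ℤ) = -(τ:ℤ)) := by omega
      simp [this]

lemma ccc_transpose (M N : ℕ) (hM : 0 < M) (hN : 0 < N) (x : ℕ → ℕ → ℕ → ℂ)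
    (hx : ∀ m1 < M, ∀ m2 < M,
      ∑ n ∈ Finset.range M, pol (x m1 n) N * polc (x m2 n) N =
        AddMonoidAlgebra.single 0 (if m1 = m2 then (M * N : ℂ) else 0)) :
    ∀ n1 < M, ∀ n2 < M,
      ∑ k ∈ Finset.range M, polc (x k n1) N * pol (x k n2) N =
        AddMonoidAlgebra.single 0 (if n1 = n2 then (M * N : ℂ) else 0) := by
  set R := AddMonoidAlgebra ℂ ℤ
  set w : ℂ := (M * N : ℂ) with hw
  have hw0 : w ≠ 0 := by
    simp only [hw]
    exact mul_ne_zero (Nat.cast_ne_zero.2 hM.ne') (Nat.cast_ne_zero.2 hN.ne')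
  set Φ : Matrix (Fin M) (Fin M) R := fun i j => pol (x i j) N with hΦ
  set Ψ : Matrix (Fin M) (Fin M) R := fun i j => polc (x j i) N with hΨ
  have key : Φ * Ψ = w • 1 := by
    ext i j
    rw [Matrix.mul_apply, Matrix.smul_apply, Matrix.one_apply]
    have hs := hx i i.isLt j j.isLt
    rw [← Fin.sum_univ_eq_sum_range (fun n => pol (x i n) N * polc (x j n) N)] at hs
    have hs2 : (∑ k : Fin M, Φ i k * Ψ k j) =
        AddMonoidAlgebra.single 0 (if (i:ℕ) = (j:ℕ) then (M*N:ℂ) else 0) := hs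
    rw [hs2]
    by_cases he : i = j
    · subst he
      rw [if_pos rfl, if_pos rfl, AddMonoidAlgebra.one_def,
        AddMonoidAlgebra.smul_single', mul_one]
    · rw [if_neg (fun h => he (Fin.ext h)), if_neg he, smul_zero,
        AddMonoidAlgebra.single_zero]
  have key2 : Ψ * Φ = w • 1 := by
    have h1 : Φ * (w⁻¹ • Ψ) = 1 := by
      rw [Matrix.mul_smul, key, smul_smul, inv_mul_cancel₀ hw0, one_smul]
    have h2 : (w⁻¹ • Ψ) * Φ = 1 := mul_eq_one_comm.mp h1
    rw [Matrix.smul_mul] at h2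
    calc Ψ * Φ = w • (w⁻¹ • (Ψ * Φ)) := by rw [smul_smul, mul_inv_cancel₀ hw0, one_smul]
    _ = w • 1 := by rw [h2]
  intro n1 hn1 n2 hn2
  have hc := congrFun (congrFun key2 ⟨n1, hn1⟩) ⟨n2, hn2⟩
  rw [Matrix.mul_apply] at hc
  have hc2 : (∑ k : Fin M, polc (x (k:ℕ) n1) N * pol (x (k:ℕ) n2) N) =
      (w • (1 : Matrix (Fin M) (Fin M) R)) ⟨n1, hn1⟩ ⟨n2, hn2⟩ := hc
  rw [Fin.sum_univ_eq_sum_range (fun k => polc (x k n1) N * pol (x k n2) N)] at hc2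
  rw [hc2, Matrix.smul_apply, Matrix.one_apply]
  by_cases he : n1 = n2
  · subst he
    rw [if_pos rfl, if_pos rfl, AddMonoidAlgebra.one_def,
      AddMonoidAlgebra.smul_single', mul_one]
  · rw [if_neg (fun h => he (by exact congrArg Fin.val h)), if_neg he, smul_zero,
      AddMonoidAlgebra.single_zero]

lemma sum_range_mul' {β : Type*} [AddCommMonoid β] (A B : ℕ) (f : ℕ → β) :
    ∑ i ∈ Finset.range (A * B), f i =
      ∑ a ∈ Finset.range A, ∑ b ∈ Finset.range B, f (a * B + b) := by
  induction A with
  | zero => simp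
  | succ A ih =>
    rw [Nat.succ_mul, Finset.sum_range_add, ih, Finset.sum_range_succ]

lemma amd_finset_sum {ι : Type*} (f : ℤ → ℤ) (s : Finset ι) (g : ι → AddMonoidAlgebra ℂ ℤ) :
    AddMonoidAlgebra.mapDomain f (∑ i ∈ s, g i) = ∑ i ∈ s, AddMonoidAlgebra.mapDomain f (g i) := by
  ext; simp [Finsupp.mapDomain_finset_sum]

lemma scaled_sum (M N1 N2 : ℕ) (w : ℂ) (y : ℕ → ℕ → ℂ)
    (h : ∑ n ∈ Finset.range M, pol (y n) N1 * polc (y n) N1 =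
      AddMonoidAlgebra.single 0 w) :
    ∑ n ∈ Finset.range M,
      (∑ k ∈ Finset.range N1, AddMonoidAlgebra.single ((k*N2:ℕ):ℤ) (y n k)) *
      (∑ k ∈ Finset.range N1,
        AddMonoidAlgebra.single (-((k*N2:ℕ):ℤ)) ((starRingEnd ℂ) (y n k))) =
    AddMonoidAlgebra.single 0 w := by
  have step : ∀ n,
      (∑ k ∈ Finset.range N1, AddMonoidAlgebra.single ((k*N2:ℕ):ℤ) (y n k)) *
      (∑ k ∈ Finset.range N1,
        AddMonoidAlgebra.single (-((k*N2:ℕ):ℤ)) ((starRingEnd ℂ) (y n k))) =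
      AddMonoidAlgebra.mapDomain (fun t => (N2:ℤ) * t) (pol (y n) N1 * polc (y n) N1) := by
    intro n
    rw [mul_expand, Finset.sum_mul_sum, amd_finset_sum]
    refine Finset.sum_congr rfl fun k _ => ?_
    rw [amd_finset_sum]
    refine Finset.sum_congr rfl fun k' _ => ?_
    rw [AddMonoidAlgebra.single_mul_single, AddMonoidAlgebra.mapDomain_single]
    congr 1
    push_cast
    ring
  rw [Finset.sum_congr rfl (fun n _ => step n), ← amd_finset_sum, h,
    AddMonoidAlgebra.mapDomain_single, mul_zero]

lemma eSeq_eval (N1 N2 : ℕ) (hN1 : 0 < N1) (hN2 : 0 < N2) (c d : ℕ → ℕ → ℕ → ℂ)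
    (m l n k j : ℕ) (hk : k < N1) (hj : j < N2) :
    eSeq N1 N2 c d m l (n * (N1 * N2) + (k * N2 + j)) = c m n k * d l n j := by
  have hs : k * N2 + j < N1 * N2 := by
    calc k * N2 + j < k * N2 + N2 := by omega
    _ = (k + 1) * N2 := by ring
    _ ≤ N1 * N2 := Nat.mul_le_mul_right _ (by omega)
  have h1 : (n * (N1 * N2) + (k * N2 + j)) / (N1 * N2) = n := by
    rw [add_comm, Nat.add_mul_div_right _ _ (by positivity), Nat.div_eq_of_lt hs, zero_add]
  have h2 : (n * (N1 * N2) + (k * N2 + j)) % (N1 * N2) = k * N2 + j := by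
    rw [add_comm, Nat.add_mul_mod_self_right, Nat.mod_eq_of_lt hs]
  have h3 : (k * N2 + j) / N2 = k := by
    rw [add_comm, Nat.add_mul_div_right _ _ hN2, Nat.div_eq_of_lt hj, zero_add]
  have h4 : (k * N2 + j) % N2 = j := by
    rw [add_comm, Nat.add_mul_mod_self_right, Nat.mod_eq_of_lt hj]
  rw [eSeq, h1, h2, h3, h4]

lemma polE_expand (M N1 N2 : ℕ) (hN1 : 0 < N1) (hN2 : 0 < N2)
    (c d : ℕ → ℕ → ℕ → ℂ) (m l : ℕ) :
    pol (eSeq N1 N2 c d m l) (M * N1 * N2) =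
      ∑ n ∈ Finset.range M,
        (AddMonoidAlgebra.single ((n * (N1 * N2) : ℕ) : ℤ) 1 *
          ∑ k ∈ Finset.range N1, AddMonoidAlgebra.single ((k * N2 : ℕ) : ℤ) (c m n k)) *
        pol (d l n) N2 := by
  rw [pol, mul_assoc, sum_range_mul' M (N1 * N2)]
  refine Finset.sum_congr rfl fun n _ => ?_
  rw [sum_range_mul' N1 N2, Finset.mul_sum, Finset.sum_mul, pol]
  refine Finset.sum_congr rfl fun k hk => ?_
  rw [Finset.mul_sum]
  refine Finset.sum_congr rfl fun j hj => ?_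
  rw [AddMonoidAlgebra.single_mul_single, AddMonoidAlgebra.single_mul_single,
    eSeq_eval N1 N2 hN1 hN2 c d m l n k j (Finset.mem_range.mp hk) (Finset.mem_range.mp hj),
    one_mul]
  congr 1
  push_cast
  ring

lemma polcE_expand (M N1 N2 : ℕ) (hN1 : 0 < N1) (hN2 : 0 < N2)
    (c d : ℕ → ℕ → ℕ → ℂ) (m l : ℕ) :
    polc (eSeq N1 N2 c d m l) (M * N1 * N2) =
      ∑ n ∈ Finset.range M,
        (AddMonoidAlgebra.single (-((n * (N1 * N2) : ℕ) : ℤ)) 1 *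
          ∑ k ∈ Finset.range N1,
            AddMonoidAlgebra.single (-((k * N2 : ℕ) : ℤ)) ((starRingEnd ℂ) (c m n k))) *
        polc (d l n) N2 := by
  rw [polc, mul_assoc, sum_range_mul' M (N1 * N2)]
  refine Finset.sum_congr rfl fun n _ => ?_
  rw [sum_range_mul' N1 N2, Finset.mul_sum, Finset.sum_mul, polc]
  refine Finset.sum_congr rfl fun k hk => ?_
  rw [Finset.mul_sum]
  refine Finset.sum_congr rfl fun j hj => ?_
  rw [AddMonoidAlgebra.single_mul_single, AddMonoidAlgebra.single_mul_single,
    eSeq_eval N1 N2 hN1 hN2 c d m l n k j (Finset.mem_range.mp hk) (Finset.mem_range.mp hj),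
    map_mul, one_mul]
  congr 1
  push_cast
  ring

lemma key_comb {R : Type*} [CommRing R] (M : ℕ) (A B : ℕ → R) (pd qd : ℕ → ℕ → R) (w : R)
    (hd : ∀ n < M, ∀ n' < M,
      ∑ l ∈ Finset.range M, pd l n * qd l n' = if n' = n then w else 0) :
    ∑ l ∈ Finset.range M,
      (∑ n ∈ Finset.range M, A n * pd l n) * (∑ n' ∈ Finset.range M, B n' * qd l n') =
    (∑ n ∈ Finset.range M, A n * B n) * w := by
  have e1 : ∀ l ∈ Finset.range M,
      (∑ n ∈ Finset.range M, A n * pd l n) * (∑ n' ∈ Finset.range M, B n' * qd l n') =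
      ∑ n ∈ Finset.range M, ∑ n' ∈ Finset.range M,
        (A n * B n') * (pd l n * qd l n') := by
    intro l _
    rw [Finset.sum_mul_sum]
    exact Finset.sum_congr rfl fun n _ => Finset.sum_congr rfl fun n' _ => by ring
  rw [Finset.sum_congr rfl e1, Finset.sum_comm]
  have e2 : ∀ n ∈ Finset.range M,
      (∑ l ∈ Finset.range M, ∑ n' ∈ Finset.range M, (A n * B n') * (pd l n * qd l n')) =
      A n * B n * w := by
    intro n hn
    rw [Finset.sum_comm]
    have e3 : ∀ n' ∈ Finset.range M,
        (∑ l ∈ Finset.range M, (A n * B n') * (pd l n * qd l n')) =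
        if n' = n then A n * B n' * w else 0 := by
      intro n' hn'
      rw [← Finset.mul_sum, hd n (Finset.mem_range.mp hn) n' (Finset.mem_range.mp hn')]
      by_cases he : n' = n
      · rw [if_pos he, if_pos he]
      · rw [if_neg he, if_neg he, mul_zero]
    rw [Finset.sum_congr rfl e3, Finset.sum_ite_eq' (Finset.range M)]
    rw [if_pos hn]
  rw [Finset.sum_congr rfl e2, ← Finset.sum_mul]

theorem statement17 (M N1 N2 : ℕ) (hM : 0 < M) (hN1 : 0 < N1) (hN2 : 0 < N2)
    (c d : ℕ → ℕ → ℕ → ℂ)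
    (hCCCc : ∀ m1 < M, ∀ m2 < M, ∀ τ < N1,
      ∑ n ∈ Finset.range M, aCorr (c m1 n) (c m2 n) N1 τ =
        if m1 = m2 ∧ τ = 0 then (M * N1 : ℂ) else 0)
    (hCCCd : ∀ l1 < M, ∀ l2 < M, ∀ τ < N2,
      ∑ n ∈ Finset.range M, aCorr (d l1 n) (d l2 n) N2 τ =
        if l1 = l2 ∧ τ = 0 then (M * N2 : ℂ) else 0) :
    ∀ m < M, ∀ τ < M * N1 * N2,
      ∑ l ∈ Finset.range M,
        aCorr (eSeq N1 N2 c d m l) (eSeq N1 N2 c d m l) (M * N1 * N2) τ =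
        if τ = 0 then (M ^ 2 * N1 * N2 : ℂ) else 0 := by
  intro m hm τ hτ
  have hd_poly := ccc_poly M N2 d hCCCd hN2
  have hd_t := ccc_transpose M N2 hM hN2 d hd_poly
  have hc_poly := ccc_poly M N1 c hCCCc hN1
  have hcm : ∑ n ∈ Finset.range M, pol (c m n) N1 * polc (c m n) N1 =
      AddMonoidAlgebra.single 0 ((M : ℂ) * N1) := by
    simpa using hc_poly m hm m hm
  -- the combined hypothesis on d, in `key_comb` form
  have hd' : ∀ n < M, ∀ n' < M,
      ∑ l ∈ Finset.range M, pol (d l n) N2 * polc (d l n') N2 =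
        if n' = n then AddMonoidAlgebra.single 0 ((M : ℂ) * N2) else 0 := by
    intro n hn n' hn'
    have := hd_t n' hn' n hn
    rw [Finset.sum_congr rfl (fun l _ => mul_comm (polc (d l n') N2) (pol (d l n) N2))] at this
    rw [this]
    by_cases he : n' = n
    · rw [if_pos he, if_pos he]
    · rw [if_neg he, if_neg he, AddMonoidAlgebra.single_zero]
  -- the key polynomial identity
  have key : ∑ l ∈ Finset.range M,
      pol (eSeq N1 N2 c d m l) (M*N1*N2) * polc (eSeq N1 N2 c d m l) (M*N1*N2) =
      AddMonoidAlgebra.single 0 ((M:ℂ) * N1 * ((M:ℂ) * N2)) := by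
    have expand : ∀ l ∈ Finset.range M,
        pol (eSeq N1 N2 c d m l) (M*N1*N2) * polc (eSeq N1 N2 c d m l) (M*N1*N2) =
        (∑ n ∈ Finset.range M,
          (AddMonoidAlgebra.single ((n * (N1 * N2) : ℕ) : ℤ) 1 *
            ∑ k ∈ Finset.range N1, AddMonoidAlgebra.single ((k * N2 : ℕ) : ℤ) (c m n k)) *
          pol (d l n) N2) *
        (∑ n' ∈ Finset.range M,
          (AddMonoidAlgebra.single (-((n' * (N1 * N2) : ℕ) : ℤ)) 1 *
            ∑ k ∈ Finset.range N1,
              AddMonoidAlgebra.single (-((k * N2 : ℕ) : ℤ)) ((starRingEnd ℂ) (c m n' k))) *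
          polc (d l n') N2) := by
      intro l _
      rw [polE_expand M N1 N2 hN1 hN2 c d m l, polcE_expand M N1 N2 hN1 hN2 c d m l]
    rw [Finset.sum_congr rfl expand,
      key_comb M _ _ _ _ (AddMonoidAlgebra.single 0 ((M:ℂ) * N2)) hd']
    have hAB : ∀ n ∈ Finset.range M,
        (AddMonoidAlgebra.single ((n * (N1 * N2) : ℕ) : ℤ) 1 *
          ∑ k ∈ Finset.range N1, AddMonoidAlgebra.single ((k * N2 : ℕ) : ℤ) (c m n k)) *
        (AddMonoidAlgebra.single (-((n * (N1 * N2) : ℕ) : ℤ)) 1 *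
          ∑ k ∈ Finset.range N1,
            AddMonoidAlgebra.single (-((k * N2 : ℕ) : ℤ)) ((starRingEnd ℂ) (c m n k))) =
        (∑ k ∈ Finset.range N1, AddMonoidAlgebra.single ((k * N2 : ℕ) : ℤ) (c m n k)) *
        (∑ k ∈ Finset.range N1,
          AddMonoidAlgebra.single (-((k * N2 : ℕ) : ℤ)) ((starRingEnd ℂ) (c m n k))) := by
      intro n _
      have : (AddMonoidAlgebra.single ((n * (N1 * N2) : ℕ) : ℤ) 1 *
          ∑ k ∈ Finset.range N1, AddMonoidAlgebra.single ((k * N2 : ℕ) : ℤ) (c m n k)) *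
        (AddMonoidAlgebra.single (-((n * (N1 * N2) : ℕ) : ℤ)) 1 *
          ∑ k ∈ Finset.range N1,
            AddMonoidAlgebra.single (-((k * N2 : ℕ) : ℤ)) ((starRingEnd ℂ) (c m n k))) =
        (AddMonoidAlgebra.single ((n * (N1 * N2) : ℕ) : ℤ) 1 *
          AddMonoidAlgebra.single (-((n * (N1 * N2) : ℕ) : ℤ)) 1) *
        ((∑ k ∈ Finset.range N1, AddMonoidAlgebra.single ((k * N2 : ℕ) : ℤ) (c m n k)) *
         (∑ k ∈ Finset.range N1,
          AddMonoidAlgebra.single (-((k * N2 : ℕ) : ℤ)) ((starRingEnd ℂ) (c m n k)))) := by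
        ring
      rw [this, AddMonoidAlgebra.single_mul_single, add_neg_cancel, mul_one,
        ← AddMonoidAlgebra.one_def, one_mul]
    rw [Finset.sum_congr rfl hAB, scaled_sum M N1 N2 ((M:ℂ) * N1) (c m) hcm,
      AddMonoidAlgebra.single_mul_single, add_zero]
  -- conclude by extracting the coefficient at `-τ`
  have hco : ∀ l ∈ Finset.range M,
      aCorr (eSeq N1 N2 c d m l) (eSeq N1 N2 c d m l) (M*N1*N2) τ =
      (pol (eSeq N1 N2 c d m l) (M*N1*N2) * polc (eSeq N1 N2 c d m l) (M*N1*N2)).coeff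
        (-(τ:ℤ)) :=
    fun l _ => (coeff_neg _ _ _ _).symm
  rw [Finset.sum_congr rfl hco, ← Finsupp.finset_sum_apply, ← AddMonoidAlgebra.coeff_sum, key,
    AddMonoidAlgebra.coeff_single, Finsupp.single_apply]
  by_cases h0 : τ = 0
  · subst h0
    rw [if_pos (by norm_num), if_pos rfl]
    ring
  · rw [if_neg (by omega), if_neg h0]
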